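/- Let p be a prime and define f, g : ℕ+ → ℕ by f(n) = p if p | n and f(n) = 1 otherwise, and g(n) = p² if p² | n and g(n) = 1 otherwise (so f(n) = (n,p)_U and g(n) = (n,p²)_U). Then for every positive integer r there exists a positive integer n such that f(n) + g(n) ≠ f((n,r)_U) + g((n,r)_U); that is, the sum f + g is not a U-even function (mod r) for any r. -/

import Mathlib

open Finset

/-- The unitary gcd `(n,r)_U`: the largest `d` with `d ∣ n`, `d ∣ r` and `gcd(d, r/d) = 1`. -/
def unitaryGcd (n r : ℕ) : ℕ :=
  (r.divisors.filter (fun d => d ∣ n ∧ Nat.Coprime d (r / d))).sup id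

/-- For a prime `p`, with `f(n) = (n,p)_U` and `g(n) = (n,p²)_U`, the sum `f + g` is not a
`U`-even function (mod `r`) for any positive integer `r`. -/
theorem sum_not_unitary_even (p : ℕ) (hp : p.Prime)
    (f g : ℕ → ℕ)
    (hf : ∀ n : ℕ, f n = if p ∣ n then p else 1)
    (hg : ∀ n : ℕ, g n = if p ^ 2 ∣ n then p ^ 2 else 1) :
    ∀ r : ℕ, 0 < r → ∃ n : ℕ, 0 < n ∧
      f n + g n ≠ f (unitaryGcd n r) + g (unitaryGcd n r) := by
  intro r hr
  have hp2 : 2 ≤ p := hp.two_le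
  have hdiv : ∀ h : p ∣ r, (p ∣ r / p ↔ p * p ∣ r) := fun h => Nat.dvd_div_iff_mul_dvd h
  by_cases hk : p ∣ r ∧ ¬ p ^ 2 ∣ r
  · -- take n = p^2; unitaryGcd = p
    refine ⟨p ^ 2, pow_pos hp.pos 2, ?_⟩
    have hcop : Nat.Coprime p (r / p) := by
      rw [hp.coprime_iff_not_dvd]
      intro h
      exact hk.2 (by rw [pow_two]; exact (hdiv hk.1).mp h)
    have hu : unitaryGcd (p ^ 2) r = p := by
      unfold unitaryGcd
      apply le_antisymm
      · apply Finset.sup_le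
        intro d hd
        simp only [Finset.mem_filter, Nat.mem_divisors] at hd
        obtain ⟨⟨hdr, -⟩, hdp2, -⟩ := hd
        obtain ⟨i, hi, rfl⟩ := (Nat.dvd_prime_pow hp).mp hdp2
        interval_cases i
        · simpa using hp.one_le
        · simp
        · exact absurd hdr hk.2
      · refine Finset.le_sup (f := id) (b := p) ?_
        simp only [Finset.mem_filter, Nat.mem_divisors]
        exact ⟨⟨hk.1, hr.ne'⟩, dvd_pow_self p two_ne_zero, hcop⟩
    rw [hu, hf, hf, hg, hg]
    have h1 : p ∣ p ^ 2 := dvd_pow_self p two_ne_zero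
    have h2 : ¬ p ^ 2 ∣ p := fun h => absurd (Nat.le_of_dvd hp.pos h)
      (by nlinarith)
    simp [h1, h2]
    nlinarith
  · -- take n = p; unitaryGcd = 1
    refine ⟨p, hp.pos, ?_⟩
    have hu : unitaryGcd p r = 1 := by
      unfold unitaryGcd
      apply le_antisymm
      · apply Finset.sup_le
        intro d hd
        simp only [Finset.mem_filter, Nat.mem_divisors] at hd
        obtain ⟨⟨hdr, -⟩, hdp, hc⟩ := hd
        rcases (Nat.dvd_prime hp).mp hdp with rfl | rfl
        · simp
        · exfalso
          exact hk ⟨hdr, fun h => (hp.coprime_iff_not_dvd.mp hc)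
            ((hdiv hdr).mpr (by rwa [← pow_two]))⟩
      · refine Finset.le_sup (f := id) (b := 1) ?_
        simp only [Finset.mem_filter, Nat.mem_divisors]
        exact ⟨⟨one_dvd r, hr.ne'⟩, one_dvd p, Nat.coprime_one_left _⟩
    rw [hu, hf, hf, hg, hg]
    have h2 : ¬ p ^ 2 ∣ p := fun h => absurd (Nat.le_of_dvd hp.pos h) (by nlinarith)
    have h3 : ¬ p ∣ 1 := fun h => by have := Nat.eq_one_of_dvd_one h; omega
    have h4 : ¬ p ^ 2 ∣ 1 := fun h => by have := Nat.eq_one_of_dvd_one h; nlinarith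
    simp [h2, h3, h4]
    omega
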